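/- The Humbert-Bessel function z(x) = I_{m1,m2}(x) satisfies the third-order ODE x²·z''' + (m1+m2+3)·x·z'' + (m1+1)(m2+1)·z' − z = 0 for all real x. -/

import Mathlib

/-- Two-index Humbert-Bessel function. -/
noncomputable def humbert (m1 m2 : ℕ) (x : ℝ) : ℝ :=
  ∑' r : ℕ, x ^ r / (r.factorial * (m1 + r).factorial * (m2 + r).factorial)

namespace HumbertAux

/-- Coefficients of the `k`-th derivative of the Humbert function, up to index shifting. -/
noncomputable def dd (m1 m2 k r : ℕ) : ℝ :=
  1 / (r.factorial * (m1 + r + k).factorial * (m2 + r + k).factorial)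

lemma one_le_fact_cast (n : ℕ) : (1 : ℝ) ≤ (n.factorial : ℝ) := by
  exact_mod_cast Nat.one_le_iff_ne_zero.2 (Nat.factorial_ne_zero n)

lemma fact_cast_pos (n : ℕ) : (0 : ℝ) < (n.factorial : ℝ) := by
  exact_mod_cast Nat.factorial_pos n

lemma dd_nonneg (m1 m2 k r : ℕ) : 0 ≤ dd m1 m2 k r := by
  unfold dd; positivity

lemma dd_le (m1 m2 k r : ℕ) : |dd m1 m2 k r| ≤ 1 / r.factorial := by
  rw [abs_of_nonneg (dd_nonneg m1 m2 k r)]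
  unfold dd
  apply one_div_le_one_div_of_le (fact_cast_pos r)
  calc (r.factorial : ℝ) = r.factorial * 1 * 1 := by ring
    _ ≤ r.factorial * (m1 + r + k).factorial * (m2 + r + k).factorial := by
        apply mul_le_mul
        · apply mul_le_mul le_rfl (one_le_fact_cast _) zero_le_one (fact_cast_pos r).le
        · exact one_le_fact_cast _
        · exact zero_le_one
        · positivity

lemma fact_succ_cast (n : ℕ) : ((n + 1).factorial : ℝ) = ((n : ℝ) + 1) * n.factorial := by
  push_cast [Nat.factorial_succ]; ring

lemma dd_succ (m1 m2 k r : ℕ) :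
    dd m1 m2 (k + 1) r = ((r : ℝ) + 1) * dd m1 m2 k (r + 1) := by
  unfold dd
  have e1 : m1 + (r + 1) + k = m1 + r + (k + 1) := by omega
  have e2 : m2 + (r + 1) + k = m2 + r + (k + 1) := by omega
  rw [e1, e2, fact_succ_cast r, mul_one_div]
  have hr : (0:ℝ) < (r:ℝ) + 1 := by positivity
  have hA := fact_cast_pos (m1 + r + (k + 1))
  have hB := fact_cast_pos (m2 + r + (k + 1))
  have hF := fact_cast_pos r
  rw [div_eq_div_iff (by positivity) (by positivity)]
  ring

lemma dd0_rec (m1 m2 s : ℕ) :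
    dd m1 m2 0 s
      = ((s : ℝ) + 1) * ((m1 : ℝ) + s + 1) * ((m2 : ℝ) + s + 1) * dd m1 m2 0 (s + 1) := by
  unfold dd
  have e1 : m1 + (s + 1) + 0 = (m1 + s + 0) + 1 := by omega
  have e2 : m2 + (s + 1) + 0 = (m2 + s + 0) + 1 := by omega
  rw [e1, e2, fact_succ_cast s, fact_succ_cast (m1 + s + 0), fact_succ_cast (m2 + s + 0)]
  have hF := fact_cast_pos s
  have hA := fact_cast_pos (m1 + s + 0)
  have hB := fact_cast_pos (m2 + s + 0)
  have h1 : (0:ℝ) < (s:ℝ) + 1 := by positivity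
  have h2 : (0:ℝ) < ((m1 + s + 0 : ℕ) : ℝ) + 1 := by positivity
  have h3 : (0:ℝ) < ((m2 + s + 0 : ℕ) : ℝ) + 1 := by positivity
  rw [mul_one_div, div_eq_div_iff (by positivity) (by positivity)]
  have c1 : ((m1 + s + 0 : ℕ) : ℝ) = (m1 : ℝ) + s := by push_cast; ring
  have c2 : ((m2 + s + 0 : ℕ) : ℝ) = (m2 : ℝ) + s := by push_cast; ring
  rw [c1, c2]
  ring

lemma summable_c {c : ℕ → ℝ} (hc : ∀ r, |c r| ≤ 1 / r.factorial) (x : ℝ) :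
    Summable fun r : ℕ => c r * x ^ r := by
  refine Summable.of_norm_bounded (Real.summable_pow_div_factorial |x|) ?_
  intro r
  rw [norm_mul, norm_pow, Real.norm_eq_abs, Real.norm_eq_abs, div_eq_mul_inv, mul_comm (|x|^r)]
  apply mul_le_mul _ le_rfl (by positivity) (by positivity)
  simpa [one_div] using hc r

/-- Term-by-term differentiation for series with coefficients bounded by `1/r!`. -/
lemma key {c : ℕ → ℝ} (hc : ∀ r, |c r| ≤ 1 / r.factorial) (x : ℝ) :
    HasDerivAt (fun y => ∑' r : ℕ, c r * y ^ r)
      (∑' r : ℕ, ((r : ℝ) + 1) * c (r + 1) * x ^ r) x := by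
  set R : ℝ := |x| + 1 with hR
  have hR0 : (0 : ℝ) < R := by positivity
  have hxR : x ∈ Metric.ball (0 : ℝ) R := by
    simp [Real.dist_eq, hR]
  have h0R : (0 : ℝ) ∈ Metric.ball (0 : ℝ) R := by
    simp [hR]; positivity
  set u : ℕ → ℝ := fun n => (n : ℝ) * R ^ (n - 1) / n.factorial with hu_def
  have hu : Summable u := by
    rw [← summable_nat_add_iff 1]
    apply (Real.summable_pow_div_factorial R).congr
    intro n
    have hn1 : ((n:ℝ) + 1) ≠ 0 := by positivity
    have hnf : ((n.factorial : ℕ) : ℝ) ≠ 0 := (fact_cast_pos n).ne'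
    simp only [hu_def, Nat.add_sub_cancel, fact_succ_cast n]
    push_cast
    field_simp
  have hderiv : ∀ (n : ℕ) (y : ℝ), y ∈ Metric.ball (0 : ℝ) R →
      HasDerivAt (fun z => c n * z ^ n) (c n * ((n : ℝ) * y ^ (n - 1))) y := by
    intro n y _
    exact (hasDerivAt_pow n y).const_mul _
  have hbound : ∀ (n : ℕ) (y : ℝ), y ∈ Metric.ball (0 : ℝ) R →
      ‖c n * ((n : ℝ) * y ^ (n - 1))‖ ≤ u n := by
    intro n y hy
    have hyR : |y| ≤ R := by
      have := Metric.mem_ball.1 hy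
      rw [Real.dist_eq, sub_zero] at this
      linarith
    have h1 : ‖c n * ((n : ℝ) * y ^ (n - 1))‖ = |c n| * ((n : ℝ) * |y| ^ (n - 1)) := by
      rw [Real.norm_eq_abs, abs_mul, abs_mul, abs_pow, Nat.abs_cast]
    rw [h1, hu_def]
    have h2 : |y| ^ (n - 1) ≤ R ^ (n - 1) := pow_le_pow_left₀ (abs_nonneg y) hyR _
    calc |c n| * ((n : ℝ) * |y| ^ (n - 1))
        ≤ (1 / n.factorial) * ((n : ℝ) * R ^ (n - 1)) := by
          apply mul_le_mul (hc n) _ (by positivity) (by positivity)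
          exact mul_le_mul_of_nonneg_left h2 (by positivity)
      _ = (n : ℝ) * R ^ (n - 1) / n.factorial := by ring
  have h0 : Summable fun n : ℕ => c n * (0 : ℝ) ^ n :=
    summable_c hc 0
  have H := hasDerivAt_tsum_of_isPreconnected hu Metric.isOpen_ball
    (convex_ball (0 : ℝ) R).isPreconnected hderiv hbound h0R h0 hxR
  have hs : Summable fun n : ℕ => c n * ((n : ℝ) * x ^ (n - 1)) :=
    Summable.of_norm_bounded hu fun n => hbound n x hxR
  have heq : (∑' n : ℕ, c n * ((n : ℝ) * x ^ (n - 1)))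
      = ∑' r : ℕ, ((r : ℝ) + 1) * c (r + 1) * x ^ r := by
    rw [Summable.tsum_eq_zero_add hs]
    simp only [Nat.cast_zero, pow_zero, Nat.zero_sub, zero_mul, mul_zero, zero_add,
      Nat.add_sub_cancel]
    apply tsum_congr
    intro r
    push_cast
    ring
  rw [heq] at H
  exact H

/-- The `k`-th derivative function. -/
noncomputable def gg (m1 m2 k : ℕ) (x : ℝ) : ℝ := ∑' r : ℕ, dd m1 m2 k r * x ^ r

lemma hasDerivAt_gg (m1 m2 k : ℕ) (x : ℝ) :
    HasDerivAt (gg m1 m2 k) (gg m1 m2 (k + 1) x) x := by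
  have H := key (fun r => dd_le m1 m2 k r) x
  have heq : gg m1 m2 (k + 1) x = ∑' r : ℕ, ((r : ℝ) + 1) * dd m1 m2 k (r + 1) * x ^ r := by
    apply tsum_congr
    intro r
    rw [dd_succ]
  rw [heq]
  exact H

lemma humbert_eq_gg (m1 m2 : ℕ) : humbert m1 m2 = gg m1 m2 0 := by
  funext x
  unfold humbert gg dd
  apply tsum_congr
  intro r
  rw [add_zero, add_zero, div_eq_mul_inv, one_div, mul_comm]

lemma hasSum_gg (m1 m2 k : ℕ) (x : ℝ) :
    HasSum (fun r : ℕ => dd m1 m2 k r * x ^ r) (gg m1 m2 k x) :=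
  (summable_c (fun r => dd_le m1 m2 k r) x).hasSum

lemma dd1 (m1 m2 r : ℕ) : dd m1 m2 1 r = ((r:ℝ) + 1) * dd m1 m2 0 (r + 1) :=
  dd_succ m1 m2 0 r

lemma dd2 (m1 m2 r : ℕ) :
    dd m1 m2 2 r = ((r:ℝ) + 1) * ((r:ℝ) + 2) * dd m1 m2 0 (r + 2) := by
  have h1 : dd m1 m2 2 r = ((r:ℝ) + 1) * dd m1 m2 1 (r + 1) := dd_succ m1 m2 1 r
  rw [h1, dd1 m1 m2 (r + 1), show r + 1 + 1 = r + 2 from rfl]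
  push_cast
  ring

lemma dd3 (m1 m2 r : ℕ) :
    dd m1 m2 3 r = ((r:ℝ) + 1) * ((r:ℝ) + 2) * ((r:ℝ) + 3) * dd m1 m2 0 (r + 3) := by
  have h1 : dd m1 m2 3 r = ((r:ℝ) + 1) * dd m1 m2 2 (r + 1) := dd_succ m1 m2 2 r
  rw [h1, dd2 m1 m2 (r + 1), show r + 1 + 2 = r + 3 from rfl]
  push_cast
  ring

end HumbertAux

open HumbertAux in
theorem humbert_ode (m1 m2 : ℕ) (x : ℝ) :
    x ^ 2 * iteratedDeriv 3 (humbert m1 m2) x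
      + ((m1 : ℝ) + m2 + 3) * x * iteratedDeriv 2 (humbert m1 m2) x
      + ((m1 : ℝ) + 1) * ((m2 : ℝ) + 1) * deriv (humbert m1 m2) x
      - humbert m1 m2 x = 0 := by
  have hd1 : deriv (humbert m1 m2) = gg m1 m2 1 := by
    funext y
    rw [humbert_eq_gg]
    exact (hasDerivAt_gg m1 m2 0 y).deriv
  have hd2 : iteratedDeriv 2 (humbert m1 m2) = gg m1 m2 2 := by
    funext y
    rw [show (2:ℕ) = 1 + 1 from rfl, iteratedDeriv_succ, iteratedDeriv_one, hd1]
    exact (hasDerivAt_gg m1 m2 1 y).deriv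
  have hd3 : iteratedDeriv 3 (humbert m1 m2) = gg m1 m2 3 := by
    funext y
    rw [show (3:ℕ) = 2 + 1 from rfl, iteratedDeriv_succ, hd2]
    exact (hasDerivAt_gg m1 m2 2 y).deriv
  rw [hd1, hd2, hd3, humbert_eq_gg]
  set T3 : ℕ → ℝ := fun s => ((s:ℝ) - 1) * s * ((s:ℝ) + 1) * dd m1 m2 0 (s + 1) * x ^ s with hT3
  set T2 : ℕ → ℝ := fun s => (s:ℝ) * ((s:ℝ) + 1) * dd m1 m2 0 (s + 1) * x ^ s with hT2
  set T1 : ℕ → ℝ := fun s => ((s:ℝ) + 1) * dd m1 m2 0 (s + 1) * x ^ s with hT1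
  set T0 : ℕ → ℝ := fun s => dd m1 m2 0 s * x ^ s with hT0
  have H3 : HasSum T3 (x ^ 2 * gg m1 m2 3 x) := by
    have h := (hasSum_gg m1 m2 3 x).mul_left (x ^ 2)
    have heq : (fun r : ℕ => T3 (r + 2)) = fun r : ℕ => x ^ 2 * (dd m1 m2 3 r * x ^ r) := by
      funext r
      simp only [hT3]
      rw [dd3 m1 m2 r, show r + 2 + 1 = r + 3 from rfl]
      push_cast
      ring
    rw [← heq] at h
    have h2 := (hasSum_nat_add_iff (f := T3) 2).1 h
    have hsum2 : ∑ i ∈ Finset.range 2, T3 i = 0 := by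
      norm_num [hT3, Finset.sum_range_succ]
    rwa [hsum2, add_zero] at h2
  have H2 : HasSum T2 (x * gg m1 m2 2 x) := by
    have h := (hasSum_gg m1 m2 2 x).mul_left x
    have heq : (fun r : ℕ => T2 (r + 1)) = fun r : ℕ => x * (dd m1 m2 2 r * x ^ r) := by
      funext r
      simp only [hT2]
      rw [dd2 m1 m2 r, show r + 1 + 1 = r + 2 from rfl]
      push_cast
      ring
    rw [← heq] at h
    have h2 := (hasSum_nat_add_iff (f := T2) 1).1 h
    have hsum1 : ∑ i ∈ Finset.range 1, T2 i = 0 := by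
      norm_num [hT2, Finset.sum_range_succ]
    rwa [hsum1, add_zero] at h2
  have H1 : HasSum T1 (gg m1 m2 1 x) := by
    have h := hasSum_gg m1 m2 1 x
    have heq : T1 = fun r : ℕ => dd m1 m2 1 r * x ^ r := by
      funext r
      simp only [hT1]
      rw [dd1 m1 m2 r]
    rwa [← heq] at h
  have H0 : HasSum T0 (gg m1 m2 0 x) := hasSum_gg m1 m2 0 x
  have Hall : HasSum
      (fun s => T3 s + ((m1:ℝ) + m2 + 3) * T2 s
        + ((m1:ℝ) + 1) * ((m2:ℝ) + 1) * T1 s - T0 s)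
      (x ^ 2 * gg m1 m2 3 x + ((m1:ℝ) + m2 + 3) * (x * gg m1 m2 2 x)
        + ((m1:ℝ) + 1) * ((m2:ℝ) + 1) * gg m1 m2 1 x - gg m1 m2 0 x) :=
    ((H3.add (H2.mul_left _)).add (H1.mul_left _)).sub H0
  have hzero : ∀ s : ℕ, T3 s + ((m1:ℝ) + m2 + 3) * T2 s
      + ((m1:ℝ) + 1) * ((m2:ℝ) + 1) * T1 s - T0 s = 0 := by
    intro s
    simp only [hT3, hT2, hT1, hT0]
    rw [dd0_rec m1 m2 s]
    ring
  rw [funext hzero] at Hall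
  have hfin := hasSum_zero.unique Hall
  linear_combination -hfin
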